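/- Let Z₁ = (z_{ij}) ∈ ℝ^{p×p}, W = diag(w₁,…,w_p), Λ_p = diag(λ₁,…,λ_p), S_p = diag(s₁,…,s_p) with s_i² = w_i − λ_i/μ, μ > 0. Then μ tr(Z₁ᵀWZ₁) − tr(Z₁ᵀZ₁Λ_p) + μ tr(Z₁ᵀS_pZ₁ᵀS_p) = 2∑_{i=1}^p (μw_i − λ_i) z_{ii}² + ∑_{i<j} (z_{ij}, z_{ji}) M_{ij} (z_{ij}, z_{ji})ᵀ, where M_{ij} = [[μw_i − λ_j, μs_is_j], [μs_is_j, μw_j − λ_i]]. -/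

import Mathlib

open Matrix

lemma pair_sum {p : ℕ} (F : Fin p → Fin p → ℝ) :
    ∑ i : Fin p, ∑ j : Fin p, F i j
      = ∑ i : Fin p, F i i
        + ∑ i : Fin p, ∑ j : Fin p, (if i < j then F i j + F j i else 0) := by
  have key : ∀ i j : Fin p, F i j
      = (if i < j then F i j else 0) + (if i = j then F i j else 0)
        + (if j < i then F i j else 0) := by
    intro i j
    rcases lt_trichotomy i j with h | h | h
    · simp [h, h.ne, not_lt.mpr h.le]
    · simp [h]
    · simp [h, h.ne', not_lt.mpr h.le]
  calc ∑ i : Fin p, ∑ j : Fin p, F i j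
      = ∑ i : Fin p, ∑ j : Fin p, ((if i < j then F i j else 0)
          + (if i = j then F i j else 0) + (if j < i then F i j else 0)) := by
        simp_rw [← key]
    _ = ∑ i : Fin p, ∑ j : Fin p, (if i < j then F i j else 0)
        + ∑ i : Fin p, ∑ j : Fin p, (if i = j then F i j else 0)
        + ∑ i : Fin p, ∑ j : Fin p, (if j < i then F i j else 0) := by
        simp_rw [Finset.sum_add_distrib]
    _ = ∑ i : Fin p, ∑ j : Fin p, (if i < j then F i j else 0)
        + ∑ i : Fin p, F i i
        + ∑ i : Fin p, ∑ j : Fin p, (if i < j then F j i else 0) := by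
        rw [Finset.sum_comm (f := fun i j => if j < i then F i j else 0)]
        simp
    _ = _ := by
        have : ∀ i j : Fin p, (if i < j then F i j else 0) + (if i < j then F j i else 0)
            = (if i < j then F i j + F j i else 0) := by
          intro i j; split <;> simp
        rw [add_right_comm, add_comm]
        congr 1
        rw [← Finset.sum_add_distrib]
        refine Finset.sum_congr rfl fun i _ => ?_
        rw [← Finset.sum_add_distrib]
        exact Finset.sum_congr rfl fun j _ => this i j

theorem stmt_14 {p : ℕ} (μ : ℝ) (hμ : 0 < μ)
    (w lam : Fin p → ℝ) (hwl : ∀ i : Fin p, lam i < μ * w i)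
    (s : Fin p → ℝ) (hs : ∀ i : Fin p, s i = Real.sqrt (w i - lam i / μ))
    (Z : Matrix (Fin p) (Fin p) ℝ) :
    μ * (Zᵀ * Matrix.diagonal w * Z).trace
      - (Zᵀ * Z * Matrix.diagonal lam).trace
      + μ * (Zᵀ * Matrix.diagonal s * Zᵀ * Matrix.diagonal s).trace
    = 2 * ∑ i : Fin p, (μ * w i - lam i) * (Z i i) ^ 2
      + ∑ i : Fin p, ∑ j : Fin p, if i < j then
          (μ * w i - lam j) * (Z i j) ^ 2
          + 2 * (μ * s i * s j) * (Z i j) * (Z j i)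
          + (μ * w j - lam i) * (Z j i) ^ 2
        else 0 := by
  have hss : ∀ i : Fin p, μ * (s i * s i) = μ * w i - lam i := by
    intro i
    have h0 : (0:ℝ) ≤ w i - lam i / μ := by
      have := (div_lt_iff₀ hμ).mpr (by linarith [hwl i] : lam i < w i * μ)
      linarith
    rw [hs i, Real.mul_self_sqrt h0]
    field_simp
  set F : Fin p → Fin p → ℝ := fun i j =>
    (μ * w i - lam j) * (Z i j) ^ 2 + μ * s i * s j * Z i j * Z j i with hF
  have hLHS : μ * (Zᵀ * Matrix.diagonal w * Z).trace
      - (Zᵀ * Z * Matrix.diagonal lam).trace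
      + μ * (Zᵀ * Matrix.diagonal s * Zᵀ * Matrix.diagonal s).trace
      = ∑ j : Fin p, ∑ i : Fin p, F i j := by
    simp only [Matrix.trace, Matrix.diag_apply, Matrix.mul_apply,
      Matrix.transpose_apply, Matrix.diagonal_apply, mul_ite, ite_mul,
      mul_zero, zero_mul, Finset.sum_ite_eq, Finset.sum_ite_eq',
      Finset.mem_univ, if_true, Finset.mul_sum, hF]
    rw [← Finset.sum_sub_distrib, ← Finset.sum_add_distrib]
    refine Finset.sum_congr rfl fun j _ => ?_
    simp only [Finset.sum_mul, Finset.mul_sum]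
    rw [← Finset.sum_sub_distrib, ← Finset.sum_add_distrib]
    exact Finset.sum_congr rfl fun i _ => by ring
  rw [hLHS, Finset.sum_comm, pair_sum F]
  congr 1
  · rw [Finset.mul_sum]
    refine Finset.sum_congr rfl fun i _ => ?_
    simp only [hF]
    nlinarith [hss i]
  · refine Finset.sum_congr rfl fun i _ => Finset.sum_congr rfl fun j _ => ?_
    split
    · simp only [hF]; ring
    · rfl
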